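/- arXiv:hep-th/0405089 — 2 statements merged into one kernel-verified Lean document; each statement's English description precedes it below -/
import Mathlib

section
/- Let f : ℂⁿ → ℂ be symmetric in its arguments, vanish whenever two arguments coincide, and be analytic on and inside a simple closed contour C traversed n-fold. Let 𝔞 be meromorphic with 1+𝔞 having only simple zeros λ_1,…,λ_M inside C, and 1/(1+𝔞) having no other poles inside C. Then (1/n!)∫_{Cⁿ} ∏_j dω_j/(2πi(1+𝔞(ω_j))) f(ω_1,…,ω_n) = ∑_{subsets {λ⁺}⊂{λ}, |λ⁺|=n} f(λ_1⁺,…,λ_n⁺)/∏_{j=1}^n 𝔞'(λ_j⁺). -/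
open Complex Metric Set Function Filter
open scoped Topology

private lemma key_diff (w : ℂ) (t : Finset ℂ) (A : Set ℂ) :
    (A \ ↑t) \ {w} = A \ ↑(insert w t) := by
  rw [Set.diff_diff, Finset.coe_insert, Set.insert_eq, Set.union_comm]

private lemma removable_extension {c : ℂ} {R : ℝ} (s : Finset ℂ) :
    ∀ F : ℂ → ℂ, (↑s : Set ℂ) ⊆ ball c R →
      ContinuousOn F (closedBall c R \ ↑s) →
      (∀ z ∈ ball c R \ (↑s : Set ℂ), DifferentiableAt ℂ F z) →
      (∀ w ∈ s, ∃ L, Filter.Tendsto F (𝓝[≠] w) (𝓝 L)) →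
      ∃ G : ℂ → ℂ, ContinuousOn G (closedBall c R) ∧
        (∀ z ∈ ball c R, DifferentiableAt ℂ G z) ∧ Set.EqOn G F (closedBall c R \ ↑s) := by
  classical
  induction s using Finset.induction_on with
  | empty =>
    intro F _ hc hd _
    exact ⟨F, by simpa using hc, by simpa using hd, fun z _ => rfl⟩
  | @insert w t hwt ih =>
    intro F hsub hc hd hlim
    have hwball : w ∈ ball c R := hsub (by simp)
    have htball : (↑t : Set ℂ) ⊆ ball c R := fun x hx => hsub (by simp [hx])
    have hopen : IsOpen (ball c R \ (↑t : Set ℂ)) :=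
      isOpen_ball.sdiff t.finite_toSet.isClosed
    have hwmem : ball c R \ (↑t : Set ℂ) ∈ 𝓝 w := hopen.mem_nhds ⟨hwball, by simpa using hwt⟩
    obtain ⟨L, hL⟩ := hlim w (Finset.mem_insert_self w t)
    have hdF : DifferentiableOn ℂ F ((ball c R \ (↑t : Set ℂ)) \ {w}) := by
      rw [key_diff]
      exact fun z hz => (hd z hz).differentiableWithinAt
    have ho : (fun z => F z - F w) =o[𝓝[≠] w] fun z => (z - w)⁻¹ :=
      Filter.IsBoundedUnder.isLittleO_sub_self_inv
        ((hL.sub_const (F w)).norm.isBoundedUnder_le)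
    set F' := Function.update F w (limUnder (𝓝[≠] w) F) with hF'def
    have hdiffF' : DifferentiableOn ℂ F' (ball c R \ (↑t : Set ℂ)) :=
      Complex.differentiableOn_update_limUnder_of_isLittleO hwmem hdF ho
    have hF'eq : ∀ z, z ≠ w → F' z = F z := fun z hz => Function.update_of_ne hz _ _
    have hdAt : ∀ z ∈ ball c R \ (↑t : Set ℂ), DifferentiableAt ℂ F' z :=
      fun z hz => hdiffF'.differentiableAt (hopen.mem_nhds hz)
    have hcF' : ContinuousOn F' (closedBall c R \ (↑t : Set ℂ)) := by
      intro z hz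
      rcases eq_or_ne z w with rfl | hne
      · exact (hdAt z ⟨hwball, by simpa using hwt⟩).continuousAt.continuousWithinAt
      · have h1 : ContinuousWithinAt F (closedBall c R \ ↑(insert w t)) z :=
          hc z (by rw [← key_diff]; exact ⟨hz, hne⟩)
        have h2 : ContinuousWithinAt F' (closedBall c R \ ↑(insert w t)) z := by
          refine h1.congr (fun x hx => ?_) (hF'eq z hne)
          rw [← key_diff] at hx
          exact hF'eq x hx.2
        have hsets : ((closedBall c R \ (↑t : Set ℂ)) \ {w} : Set ℂ) =ᶠ[𝓝 z]
            (closedBall c R \ (↑t : Set ℂ)) := by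
          apply Filter.eventuallyEq_set.2
          filter_upwards [isOpen_compl_singleton.mem_nhds hne] with x hx
          simp only [Set.mem_diff, Set.mem_singleton_iff]
          exact ⟨fun h => h.1, fun h => ⟨h, hx⟩⟩
        exact ((by rw [key_diff]; exact h2 : ContinuousWithinAt F'
          ((closedBall c R \ (↑t : Set ℂ)) \ {w}) z)).congr_set hsets
    have hlimF' : ∀ v ∈ t, ∃ L', Filter.Tendsto F' (𝓝[≠] v) (𝓝 L') := by
      intro v hv
      obtain ⟨L', hL'⟩ := hlim v (Finset.mem_insert_of_mem hv)
      have hvw : v ≠ w := by rintro rfl; exact hwt hv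
      refine ⟨L', hL'.congr' ?_⟩
      have : {w}ᶜ ∈ 𝓝[≠] v :=
        mem_nhdsWithin_of_mem_nhds (isOpen_compl_singleton.mem_nhds hvw)
      filter_upwards [this] with x hx
      exact (hF'eq x hx).symm
    obtain ⟨G, hGc, hGd, hGeq⟩ := ih F' htball hcF' hdAt hlimF'
    refine ⟨G, hGc, hGd, fun z hz => ?_⟩
    rw [← key_diff] at hz
    exact (hGeq hz.1).trans (hF'eq z hz.2)

private lemma circleIntegral_zero_of_removable {c : ℂ} {R : ℝ} (hR : 0 < R) (s : Finset ℂ)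
    (F : ℂ → ℂ) (hsub : (↑s : Set ℂ) ⊆ ball c R)
    (hc : ContinuousOn F (closedBall c R \ ↑s))
    (hd : ∀ z ∈ ball c R \ (↑s : Set ℂ), DifferentiableAt ℂ F z)
    (hlim : ∀ w ∈ s, ∃ L, Filter.Tendsto F (𝓝[≠] w) (𝓝 L)) :
    (∮ z in C(c, R), F z) = 0 := by
  obtain ⟨G, hGc, hGd, hGeq⟩ := removable_extension s F hsub hc hd hlim
  have hsphere : Set.EqOn F G (sphere c R) := by
    intro z hz
    have hzs : z ∉ (↑s : Set ℂ) := by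
      intro h
      have h1 := hsub h
      rw [mem_ball] at h1
      rw [mem_sphere] at hz
      exact absurd h1 (by rw [hz]; exact lt_irrefl R)
    exact (hGeq ⟨sphere_subset_closedBall hz, hzs⟩).symm
  rw [circleIntegral.integral_congr hR.le hsphere]
  exact Complex.circleIntegral_eq_zero_of_differentiable_on_off_countable hR.le
    Set.countable_empty hGc (fun z hz => hGd z hz.1)


private lemma slope_helper (gz rk a b : ℂ) (hb : b ≠ 0) :
    (gz / (a / b) - rk) / b = a⁻¹ * gz - rk * b⁻¹ := by
  rcases eq_or_ne a 0 with rfl | ha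
  · simp [div_eq_mul_inv]
  · field_simp

private lemma circleInt_add {f g : ℂ → ℂ} {c : ℂ} {R : ℝ} (hf : CircleIntegrable f c R)
    (hg : CircleIntegrable g c R) :
    (∮ z in C(c, R), f z + g z) = (∮ z in C(c, R), f z) + ∮ z in C(c, R), g z := by
  simp only [circleIntegral, smul_add, intervalIntegral.integral_add hf.out hg.out]

private lemma circleInt_sum {ι : Type*} (s : Finset ι) (f : ι → ℂ → ℂ) {c : ℂ} {R : ℝ}
    (h : ∀ i ∈ s, CircleIntegrable (f i) c R) :
    (∮ z in C(c, R), ∑ i ∈ s, f i z) = ∑ i ∈ s, ∮ z in C(c, R), f i z := by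
  simp only [circleIntegral]
  rw [← intervalIntegral.integral_finset_sum (fun i hi => (h i hi).out)]
  congr 1
  ext θ
  rw [Finset.smul_sum]
private lemma single_residue {c : ℂ} {R : ℝ} (hR : 0 < R) {M : ℕ} {𝔞 : ℂ → ℂ}
    (h𝔞 : AnalyticOnNhd ℂ 𝔞 (closedBall c R))
    {lam : Fin M → ℂ} (hinj : Function.Injective lam)
    (hin : ∀ j, lam j ∈ ball c R)
    (hzero : ∀ j, 1 + 𝔞 (lam j) = 0)
    (hsimple : ∀ j, deriv 𝔞 (lam j) ≠ 0)
    (honly : ∀ z ∈ closedBall c R, 1 + 𝔞 z = 0 → ∃ j, z = lam j)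
    {g : ℂ → ℂ} (hg : AnalyticOnNhd ℂ g (closedBall c R)) :
    (∮ z in C(c, R), (2 * Real.pi * I * (1 + 𝔞 z))⁻¹ * g z)
      = ∑ j, g (lam j) / deriv 𝔞 (lam j) := by
  classical
  set r : Fin M → ℂ := fun j => g (lam j) / deriv 𝔞 (lam j) with hr
  set H : ℂ → ℂ := fun z => (1 + 𝔞 z)⁻¹ * g z - ∑ j, r j * (z - lam j)⁻¹ with hH
  set s : Finset ℂ := Finset.univ.image lam with hs
  have hsub : (↑s : Set ℂ) ⊆ ball c R := by
    intro x hx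
    simp only [hs, Finset.coe_image, Set.mem_image] at hx
    obtain ⟨j, _, rfl⟩ := hx
    exact hin j
  have hnes : ∀ z ∈ closedBall c R, z ∉ (↑s : Set ℂ) → (1 + 𝔞 z ≠ 0 ∧ ∀ j, z ≠ lam j) := by
    intro z hz hzs
    constructor
    · intro h0
      obtain ⟨j, rfl⟩ := honly z hz h0
      exact hzs (by simp [hs])
    · intro j h
      exact hzs (by simp [hs, h])
  have hsphere_sub : sphere c R ⊆ closedBall c R \ ↑s := by
    intro z hz
    refine ⟨sphere_subset_closedBall hz, ?_⟩
    intro h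
    have h1 := hsub h
    rw [mem_ball] at h1
    rw [mem_sphere] at hz
    exact absurd h1 (by rw [hz]; exact lt_irrefl R)
  have h𝔞c : ContinuousOn 𝔞 (closedBall c R) := h𝔞.continuousOn
  have hgc : ContinuousOn g (closedBall c R) := hg.continuousOn
  have hPc : ContinuousOn (fun z => (1 + 𝔞 z)⁻¹ * g z) (closedBall c R \ ↑s) := by
    refine ContinuousOn.mul (ContinuousOn.inv₀ ?_ ?_) (hgc.mono diff_subset)
    · exact continuousOn_const.add (h𝔞c.mono diff_subset)
    · exact fun z hz => (hnes z hz.1 hz.2).1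
  have hQc : ∀ j : Fin M, ContinuousOn (fun z => r j * (z - lam j)⁻¹) (closedBall c R \ ↑s) := by
    intro j
    refine continuousOn_const.mul (ContinuousOn.inv₀ ?_ ?_)
    · exact (continuous_id.sub continuous_const).continuousOn
    · exact fun z hz => sub_ne_zero.2 ((hnes z hz.1 hz.2).2 j)
  have hHc : ContinuousOn H (closedBall c R \ ↑s) :=
    hPc.sub (continuousOn_finset_sum _ (fun j _ => hQc j))
  have hHd : ∀ z ∈ ball c R \ (↑s : Set ℂ), DifferentiableAt ℂ H z := by
    intro z hz
    have hzc : z ∈ closedBall c R := ball_subset_closedBall hz.1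
    have h1 : 1 + 𝔞 z ≠ 0 := (hnes z hzc hz.2).1
    have h2 : ∀ j, z ≠ lam j := (hnes z hzc hz.2).2
    apply DifferentiableAt.sub
    · exact (((differentiableAt_const _).add (h𝔞 z hzc).differentiableAt).inv h1).mul
        (hg z hzc).differentiableAt
    · exact DifferentiableAt.fun_sum (fun j _ => (differentiableAt_const _).mul
        ((differentiableAt_id.sub (differentiableAt_const _)).inv (sub_ne_zero.2 (h2 j))))
  have hHlim : ∀ w ∈ s, ∃ L, Filter.Tendsto H (𝓝[≠] w) (𝓝 L) := by
    intro w hw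
    obtain ⟨k, _, rfl⟩ := Finset.mem_image.mp hw
    have hmemk : lam k ∈ closedBall c R := ball_subset_closedBall (hin k)
    obtain ⟨U, hUopen, hUmem, hUdiff⟩ : ∃ U : Set ℂ, IsOpen U ∧ lam k ∈ U ∧
        DifferentiableOn ℂ 𝔞 U := by
      have h1 := (h𝔞 (lam k) hmemk).eventually_analyticAt
      rw [_root_.eventually_nhds_iff] at h1
      obtain ⟨U, hU1, hU2, hU3⟩ := h1
      exact ⟨U, hU2, hU3, fun z hz => ((hU1 z hz).differentiableAt).differentiableWithinAt⟩
    set φ : ℂ → ℂ := dslope (fun z => 1 + 𝔞 z) (lam k) with hφ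
    have hφdiff : DifferentiableOn ℂ φ U := by
      rw [hφ, Complex.differentiableOn_dslope (hUopen.mem_nhds hUmem)]
      exact (differentiableOn_const _).add hUdiff
    have hφk : φ (lam k) = deriv 𝔞 (lam k) := by
      rw [hφ, dslope_same]
      exact deriv_const_add _
    set ψ : ℂ → ℂ := fun z => g z / φ z with hψ
    have hψd : DifferentiableAt ℂ ψ (lam k) := by
      refine ((hg (lam k) hmemk).differentiableAt).div
        (hφdiff.differentiableAt (hUopen.mem_nhds hUmem)) ?_
      rw [hφk]; exact hsimple k
    have hψk : ψ (lam k) = r k := by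
      rw [hψ]
      simp only [hr, hφk]
    have hslope : Filter.Tendsto (slope ψ (lam k)) (𝓝[≠] lam k) (𝓝 (deriv ψ (lam k))) :=
      hasDerivAt_iff_tendsto_slope.mp hψd.hasDerivAt
    have hslope_eq : ∀ z, z ≠ lam k →
        slope ψ (lam k) z = (1 + 𝔞 z)⁻¹ * g z - r k * (z - lam k)⁻¹ := by
      intro z hz
      have hb : z - lam k ≠ 0 := sub_ne_zero.2 hz
      have hφz : φ z = (1 + 𝔞 z) / (z - lam k) := by
        rw [hφ, dslope_of_ne _ hz]
        simp only [slope_def_field]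
        rw [hzero k, sub_zero]
      rw [slope_def_field, hψk, hψ]
      simp only [hφz]
      exact slope_helper _ _ _ _ hb
    refine ⟨deriv ψ (lam k) - ∑ j ∈ Finset.univ.erase k, r j * (lam k - lam j)⁻¹, ?_⟩
    have hrest : Filter.Tendsto (fun z => ∑ j ∈ Finset.univ.erase k, r j * (z - lam j)⁻¹)
        (𝓝 (lam k)) (𝓝 (∑ j ∈ Finset.univ.erase k, r j * (lam k - lam j)⁻¹)) := by
      apply tendsto_finset_sum
      intro j hj
      have hne : lam k ≠ lam j := fun h => (Finset.mem_erase.mp hj).1 (hinj h).symm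
      exact tendsto_const_nhds.mul
        (((continuous_id.sub continuous_const).tendsto _).inv₀ (sub_ne_zero.2 hne))
    have hmain := hslope.sub (hrest.mono_left nhdsWithin_le_nhds)
    refine Filter.Tendsto.congr' ?_ hmain
    filter_upwards [self_mem_nhdsWithin] with z hz
    have hzne : z ≠ lam k := hz
    rw [hslope_eq z hzne, hH]
    simp only
    rw [← Finset.add_sum_erase _ _ (Finset.mem_univ k)]
    ring
  have h2pi : (2 * Real.pi * I : ℂ) ≠ 0 := by
    simp [Real.pi_ne_zero, I_ne_zero]
  have hH_int : CircleIntegrable H c R := (hHc.mono hsphere_sub).circleIntegrable hR.le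
  have hQsum_int : CircleIntegrable (fun z => ∑ j, r j * (z - lam j)⁻¹) c R :=
    ((continuousOn_finset_sum _ (fun j _ => hQc j)).mono hsphere_sub).circleIntegrable hR.le
  have hint_eq1 : (∮ z in C(c, R), (2 * Real.pi * I * (1 + 𝔞 z))⁻¹ * g z)
      = ∮ z in C(c, R), (2 * Real.pi * I : ℂ)⁻¹ • (H z + ∑ j, r j * (z - lam j)⁻¹) := by
    apply circleIntegral.integral_congr hR.le
    intro z _
    simp only [smul_eq_mul, hH]
    rw [mul_inv]
    ring
  rw [hint_eq1, circleIntegral.integral_smul, circleInt_add hH_int hQsum_int]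
  have hHzero : (∮ z in C(c, R), H z) = 0 :=
    circleIntegral_zero_of_removable hR s H hsub hHc hHd hHlim
  have hQint : (∮ z in C(c, R), ∑ j, r j * (z - lam j)⁻¹) = ∑ j, r j * (2 * Real.pi * I) := by
    rw [circleInt_sum Finset.univ (fun j z => r j * (z - lam j)⁻¹)
      (fun j _ => ((hQc j).mono hsphere_sub).circleIntegrable hR.le)]
    refine Finset.sum_congr rfl (fun j _ => ?_)
    have : (∮ z in C(c, R), r j * (z - lam j)⁻¹)
        = r j • ∮ z in C(c, R), (z - lam j)⁻¹ := by
      rw [← circleIntegral.integral_smul]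
      simp [smul_eq_mul]
    rw [this, circleIntegral.integral_sub_inv_of_mem_ball (hin j)]
    simp [smul_eq_mul]
  rw [hHzero, hQint, zero_add, ← Finset.sum_mul]
  simp only [smul_eq_mul]
  field_simp
/-- The `n`-fold iterated contour integral over the circle `C(c,R)`. -/
noncomputable def iterCircleInt (c : ℂ) (R : ℝ) : (n : ℕ) → ((Fin n → ℂ) → ℂ) → ℂ
  | 0, f => f ![]
  | n + 1, f => ∮ z in C(c, R), iterCircleInt c R n (fun v => f (Fin.cons z v))

private lemma iterCircleInt_const_mul (c : ℂ) (R : ℝ) :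
    ∀ (n : ℕ) (a : ℂ) (F : (Fin n → ℂ) → ℂ),
      iterCircleInt c R n (fun v => a * F v) = a * iterCircleInt c R n F := by
  intro n
  induction n with
  | zero => intro a F; rfl
  | succ n ih =>
    intro a F
    show (∮ z in C(c, R), iterCircleInt c R n fun v => a * F (Fin.cons z v))
        = a * ∮ z in C(c, R), iterCircleInt c R n fun v => F (Fin.cons z v)
    simp only [ih]
    simp only [← smul_eq_mul, circleIntegral.integral_smul]

private lemma iter_residue {c : ℂ} {R : ℝ} (hR : 0 < R) {M : ℕ} {𝔞 : ℂ → ℂ}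
    (h𝔞 : AnalyticOnNhd ℂ 𝔞 (closedBall c R))
    {lam : Fin M → ℂ} (hinj : Function.Injective lam)
    (hin : ∀ j, lam j ∈ ball c R)
    (hzero : ∀ j, 1 + 𝔞 (lam j) = 0)
    (hsimple : ∀ j, deriv 𝔞 (lam j) ≠ 0)
    (honly : ∀ z ∈ closedBall c R, 1 + 𝔞 z = 0 → ∃ j, z = lam j) :
    ∀ (n : ℕ) (f : (Fin n → ℂ) → ℂ),
      (∀ (i : Fin n) (v : Fin n → ℂ),
        AnalyticOnNhd ℂ (fun z => f (Function.update v i z)) (closedBall c R)) →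
      iterCircleInt c R n (fun v => (∏ j, (2 * Real.pi * I * (1 + 𝔞 (v j)))⁻¹) * f v)
        = ∑ g : Fin n → Fin M, f (lam ∘ g) / ∏ j, deriv 𝔞 (lam (g j)) := by
  intro n
  induction n with
  | zero =>
    intro f _
    have h0 : iterCircleInt c R 0 (fun v => (∏ j, (2 * Real.pi * I * (1 + 𝔞 (v j)))⁻¹) * f v)
        = f ![] := by
      show (∏ j : Fin 0, (2 * Real.pi * I * (1 + 𝔞 (![] j)))⁻¹) * f ![] = f ![]
      simp
    rw [h0]
    have h1 : ∀ g : Fin 0 → Fin M,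
        f (lam ∘ g) / ∏ j, deriv 𝔞 (lam (g j)) = f ![] := by
      intro g
      rw [Subsingleton.elim (lam ∘ g) ![]]
      simp
    simp only [h1]
    rw [Finset.sum_const]
    simp
  | succ n ih =>
    intro f hanal
    have h2pi : (2 * Real.pi * I : ℂ) ≠ 0 := by
      simp [Real.pi_ne_zero, I_ne_zero]
    have hanal' : ∀ (z : ℂ) (i : Fin n) (v : Fin n → ℂ),
        AnalyticOnNhd ℂ (fun w => f (Fin.cons z (Function.update v i w))) (closedBall c R) := by
      intro z i v
      have h := hanal i.succ (Fin.cons z v)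
      simp only [← Fin.cons_update] at h
      exact h
    have hg0 : ∀ w : Fin n → ℂ, AnalyticOnNhd ℂ (fun z => f (Fin.cons z w)) (closedBall c R) := by
      intro w
      have h := hanal 0 (Fin.cons 0 w)
      simp only [Fin.update_cons_zero] at h
      exact h
    have hnz : ∀ z ∈ sphere c R, (1 + 𝔞 z) ≠ 0 := by
      intro z hz h0
      obtain ⟨j, rfl⟩ := honly z (sphere_subset_closedBall hz) h0
      have h1 := hin j
      rw [mem_ball] at h1
      rw [mem_sphere] at hz
      exact absurd h1 (by rw [hz]; exact lt_irrefl R)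
    have step1 : iterCircleInt c R (n+1)
          (fun v => (∏ j, (2 * Real.pi * I * (1 + 𝔞 (v j)))⁻¹) * f v)
        = ∮ z in C(c, R), (2 * Real.pi * I * (1 + 𝔞 z))⁻¹ *
            (∑ g : Fin n → Fin M, f (Fin.cons z (lam ∘ g)) / ∏ j, deriv 𝔞 (lam (g j))) := by
      rw [iterCircleInt]
      congr 1
      funext z
      have e1 : (fun v : Fin n → ℂ =>
            (∏ j, (2 * Real.pi * I * (1 + 𝔞 ((Fin.cons z v : Fin (n+1) → ℂ) j)))⁻¹) *
              f (Fin.cons z v))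
          = fun v => (2 * Real.pi * I * (1 + 𝔞 z))⁻¹ *
              ((∏ j, (2 * Real.pi * I * (1 + 𝔞 (v j)))⁻¹) * f (Fin.cons z v)) := by
        funext v
        rw [Fin.prod_univ_succ]
        simp only [Fin.cons_zero, Fin.cons_succ]
        ring
      rw [e1, iterCircleInt_const_mul, ih (fun v => f (Fin.cons z v)) (hanal' z)]
    rw [step1]
    have hint : ∀ g : Fin n → Fin M, CircleIntegrable (fun z =>
        (2 * Real.pi * I * (1 + 𝔞 z))⁻¹ *
          (f (Fin.cons z (lam ∘ g)) / ∏ j, deriv 𝔞 (lam (g j)))) c R := by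
      intro g
      apply ContinuousOn.circleIntegrable hR.le
      refine ContinuousOn.mul (ContinuousOn.inv₀ ?_ ?_)
        (((hg0 (lam ∘ g)).continuousOn.mono sphere_subset_closedBall).div_const _)
      · exact continuousOn_const.mul
          (continuousOn_const.add (h𝔞.continuousOn.mono sphere_subset_closedBall))
      · intro z hz
        exact mul_ne_zero h2pi (hnz z hz)
    have e2 : (∮ z in C(c, R), (2 * Real.pi * I * (1 + 𝔞 z))⁻¹ *
          ∑ g : Fin n → Fin M, f (Fin.cons z (lam ∘ g)) / ∏ j, deriv 𝔞 (lam (g j)))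
        = ∑ g : Fin n → Fin M, ∮ z in C(c, R), (2 * Real.pi * I * (1 + 𝔞 z))⁻¹ *
            (f (Fin.cons z (lam ∘ g)) / ∏ j, deriv 𝔞 (lam (g j))) := by
      rw [← circleInt_sum Finset.univ _ (fun g _ => hint g)]
      refine circleIntegral.integral_congr hR.le (fun z _ => ?_)
      rw [Finset.mul_sum]
    rw [e2]
    have e3 : ∀ g : Fin n → Fin M,
        (∮ z in C(c, R), (2 * Real.pi * I * (1 + 𝔞 z))⁻¹ *
            (f (Fin.cons z (lam ∘ g)) / ∏ j, deriv 𝔞 (lam (g j))))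
          = (∑ k : Fin M, f (Fin.cons (lam k) (lam ∘ g)) / deriv 𝔞 (lam k)) /
              ∏ j, deriv 𝔞 (lam (g j)) := by
      intro g
      have e30 : (fun z => (2 * Real.pi * I * (1 + 𝔞 z))⁻¹ *
            (f (Fin.cons z (lam ∘ g)) / ∏ j, deriv 𝔞 (lam (g j))))
          = fun z => (∏ j, deriv 𝔞 (lam (g j)))⁻¹ •
              ((2 * Real.pi * I * (1 + 𝔞 z))⁻¹ * f (Fin.cons z (lam ∘ g))) := by
        funext z
        simp only [smul_eq_mul, div_eq_mul_inv]
        ring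
      rw [e30, circleIntegral.integral_smul,
        single_residue hR h𝔞 hinj hin hzero hsimple honly (hg0 (lam ∘ g))]
      rw [smul_eq_mul, mul_comm, ← div_eq_mul_inv]
    simp only [e3]
    rw [← Equiv.sum_comp (Fin.consEquiv (fun _ => Fin M))
        (fun G => f (lam ∘ G) / ∏ j, deriv 𝔞 (lam (G j))), Fintype.sum_prod_type]
    simp only [Fin.consEquiv_apply]
    simp only [Finset.sum_div]
    rw [Finset.sum_comm]
    refine Finset.sum_congr rfl (fun k _ => Finset.sum_congr rfl (fun g _ => ?_))
    simp only [Fin.consEquiv_apply, Fin.comp_cons, Fin.prod_univ_succ, Fin.cons_zero,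
      Fin.cons_succ, div_div]
    congr 1
    rw [show ((Fin.consEquiv fun _ => Fin M)) (k, g) = Fin.cons k g from rfl, Fin.comp_cons]

/-- Residue formula turning an `n`-fold contour integral of a symmetric function,
vanishing on coinciding arguments, against `∏ 1/(2πi(1+𝔞(ω_j)))` into a sum over
`n`-element subsets of the simple zeros `λ_1,…,λ_M` of `1+𝔞` inside the contour
(written as a sum over embeddings, each subset counted `n!` times). -/
theorem stmt_10 (n M : ℕ) (c : ℂ) (R : ℝ) (hR : 0 < R)
    (f : (Fin n → ℂ) → ℂ)
    (hsym : ∀ (σ : Equiv.Perm (Fin n)) (v : Fin n → ℂ), f (v ∘ σ) = f v)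
    (hvan : ∀ (v : Fin n → ℂ) (i j : Fin n), i ≠ j → v i = v j → f v = 0)
    (hanal : ∀ (i : Fin n) (v : Fin n → ℂ),
      AnalyticOnNhd ℂ (fun z => f (Function.update v i z)) (closedBall c R))
    (𝔞 : ℂ → ℂ) (h𝔞 : AnalyticOnNhd ℂ 𝔞 (closedBall c R))
    (lam : Fin M → ℂ) (hinj : Function.Injective lam)
    (hin : ∀ j, lam j ∈ ball c R)
    (hzero : ∀ j, 1 + 𝔞 (lam j) = 0)
    (hsimple : ∀ j, deriv 𝔞 (lam j) ≠ 0)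
    (honly : ∀ z ∈ closedBall c R, 1 + 𝔞 z = 0 → ∃ j, z = lam j) :
    (n.factorial : ℂ)⁻¹ *
        iterCircleInt c R n
          (fun v => (∏ j, (2 * Real.pi * I * (1 + 𝔞 (v j)))⁻¹) * f v) =
      (n.factorial : ℂ)⁻¹ *
        ∑ g : Fin n ↪ Fin M, f (lam ∘ g) / ∏ j, deriv 𝔞 (lam (g j)) := by
  classical
  haveI : DecidablePred (Function.Injective : (Fin n → Fin M) → Prop) :=
    fun g => Classical.propDecidable _
  haveI instFT : Fintype {g : Fin n → Fin M // Function.Injective g} := Subtype.fintype _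
  congr 1
  rw [iter_residue hR h𝔞 hinj hin hzero hsimple honly n f hanal]
  have hzero' : ∀ g : Fin n → Fin M, ¬Function.Injective g →
      f (lam ∘ g) / ∏ j, deriv 𝔞 (lam (g j)) = 0 := by
    intro g hg
    rw [Function.not_injective_iff] at hg
    obtain ⟨a, b, hab, hne⟩ := hg
    rw [hvan (lam ∘ g) a b hne (congrArg lam hab), zero_div]
  have h1 : ∑ g : Fin n → Fin M, f (lam ∘ g) / ∏ j, deriv 𝔞 (lam (g j))
      = ∑ g ∈ Finset.univ.filter (fun g : Fin n → Fin M => Function.Injective g),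
          f (lam ∘ g) / ∏ j, deriv 𝔞 (lam (g j)) := by
    symm
    apply Finset.sum_subset (Finset.filter_subset _ _)
    intro g _ hg
    simp only [Finset.mem_filter, Finset.mem_univ, true_and] at hg
    exact hzero' g hg
  have h2 := Finset.sum_subtype (F := instFT) (p := fun g : Fin n → Fin M => Function.Injective g)
    (Finset.univ.filter fun g : Fin n → Fin M => Function.Injective g)
    (fun g => by simp) (fun g => f (lam ∘ g) / ∏ j, deriv 𝔞 (lam (g j)))
  rw [h1, h2]
  exact Fintype.sum_equiv (Equiv.subtypeInjectiveEquivEmbedding (Fin n) (Fin M)) _ _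
    (fun p => rfl)
end

section
/- Under the XXZ Bethe ansatz condition, the limit μ_k → λ_k of the Slavnov matrix entry N̂(λ_j,μ_k) = t(λ_j,μ_k) − t(μ_k,λ_j)𝔞(μ_k) equals δ_{jk} 𝔞'(λ_k)/𝔞(λ_k) + sinh(2η)/(sinh(λ_j−λ_k+η)sinh(λ_j−λ_k−η)). -/
open Complex Filter Topology

/-- `t(λ,ξ) = sinh(η)/(sinh(λ−ξ)sinh(λ−ξ+η))`. -/
noncomputable def tker (η lam ξ : ℂ) : ℂ :=
  sinh η / (sinh (lam - ξ) * sinh (lam - ξ + η))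

lemma slope_sinh_tendsto : Tendsto (fun z : ℂ => sinh z / z) (𝓝[≠] (0:ℂ)) (𝓝 1) := by
  have h := hasDerivAt_iff_tendsto_slope.mp (Complex.hasDerivAt_sinh 0)
  simp only [Complex.cosh_zero] at h
  have : (slope sinh (0:ℂ)) = fun z : ℂ => sinh z / z := by
    funext z; simp [slope_def_field]
  rwa [this] at h

/-- Under the Bethe ansatz condition `𝔞(λ_k) = −1`, the limit `μ → λ_k` of the
Slavnov matrix entry `N̂(λ_j,μ) = t(λ_j,μ) − t(μ,λ_j)𝔞(μ)` equals
`δ_{jk} 𝔞'(λ_k)/𝔞(λ_k) + sinh(2η)/(sinh(λ_j−λ_k+η)sinh(λ_j−λ_k−η))`. -/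
theorem stmt_18 (M : ℕ) (η : ℂ) (lam : Fin M → ℂ) (𝔞 : ℂ → ℂ) (j k : Fin M)
    (hη : sinh η ≠ 0) (ha : AnalyticAt ℂ 𝔞 (lam k)) (hBethe : 𝔞 (lam k) = -1)
    (hjk : j ≠ k → sinh (lam j - lam k) ≠ 0 ∧ sinh (lam j - lam k + η) ≠ 0 ∧
      sinh (lam j - lam k - η) ≠ 0) :
    Tendsto (fun mu : ℂ => tker η (lam j) mu - tker η mu (lam j) * 𝔞 mu)
      (𝓝[≠] lam k)
      (𝓝 ((if j = k then 1 else 0) * (deriv 𝔞 (lam k) / 𝔞 (lam k)) +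
        sinh (2 * η) / (sinh (lam j - lam k + η) * sinh (lam j - lam k - η)))) := by
  by_cases hcase : j = k
  · -- diagonal case
    subst hcase
    set c := lam j with hc
    -- auxiliary limits
    have hq : Tendsto (fun mu : ℂ => mu - c) (𝓝[≠] c) (𝓝[≠] (0:ℂ)) := by
      apply tendsto_nhdsWithin_of_tendsto_nhds_of_eventually_within
      · exact ((continuous_id.sub continuous_const).tendsto' c 0 (by simp [hc])).mono_left
          nhdsWithin_le_nhds
      · filter_upwards [self_mem_nhdsWithin] with x hx
        exact sub_ne_zero.mpr hx
    have hratio : Tendsto (fun mu : ℂ => (mu - c) / sinh (mu - c)) (𝓝[≠] c) (𝓝 1) := by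
      have h1 : Tendsto (fun z : ℂ => z / sinh z) (𝓝[≠] (0:ℂ)) (𝓝 1) := by
        have := (slope_sinh_tendsto).inv₀ one_ne_zero
        simp only [inv_one] at this
        refine this.congr fun z => ?_
        rw [inv_div]
      exact h1.comp hq
    have hslope : Tendsto (slope 𝔞 c) (𝓝[≠] c) (𝓝 (deriv 𝔞 c)) :=
      hasDerivAt_iff_tendsto_slope.mp ha.differentiableAt.hasDerivAt
    have hsinhsub : Tendsto (fun mu : ℂ => sinh (mu - c - η)) (𝓝[≠] c) (𝓝 (sinh (-η))) := by
      refine (Complex.continuous_sinh.comp ((continuous_id.sub continuous_const).sub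
        continuous_const)).tendsto' c (sinh (-η)) (by simp [hc]) |>.mono_left nhdsWithin_le_nhds
    have hsinhadd : Tendsto (fun mu : ℂ => sinh (mu - c + η)) (𝓝[≠] c) (𝓝 (sinh η)) := by
      refine (Complex.continuous_sinh.comp ((continuous_id.sub continuous_const).add
        continuous_const)).tendsto' c (sinh η) (by simp [hc]) |>.mono_left nhdsWithin_le_nhds
    have hηneg : sinh (-η) ≠ 0 := by simpa using hη
    -- the comparison function g
    set g : ℂ → ℂ := fun mu =>
      sinh (2*η) / (sinh (mu - c - η) * sinh (mu - c + η))
        - sinh η * slope 𝔞 c mu * ((mu - c) / sinh (mu - c)) / sinh (mu - c + η) with hg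
    have hgl : Tendsto g (𝓝[≠] c)
        (𝓝 (sinh (2*η) / (sinh (-η) * sinh η)
          - sinh η * deriv 𝔞 c * 1 / sinh η)) := by
      exact ((tendsto_const_nhds.div (hsinhsub.mul hsinhadd)
        (mul_ne_zero hηneg hη))).sub
        ((((tendsto_const_nhds.mul hslope).mul hratio).div hsinhadd hη))
    -- limits agree with the target value
    have hval : (sinh (2*η) / (sinh (-η) * sinh η) - sinh η * deriv 𝔞 c * 1 / sinh η)
        = ((if j = j then 1 else 0) * (deriv 𝔞 c / 𝔞 c) +
          sinh (2 * η) / (sinh (lam j - lam j + η) * sinh (lam j - lam j - η))) := by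
      simp only [if_pos rfl, eq_self_iff_true, if_true, one_mul, sub_self, zero_add, zero_sub, ← hc, hBethe, sinh_neg]
      field_simp
      ring
    rw [← hval]
    -- eventual equality
    have hev : (fun mu : ℂ => tker η (lam j) mu - tker η mu (lam j) * 𝔞 mu) =ᶠ[𝓝[≠] c] g := by
      have e1 : ∀ᶠ mu in 𝓝[≠] c, sinh (mu - c) ≠ 0 := by
        have := hratio.eventually_ne (one_ne_zero)
        filter_upwards [this] with x hx
        intro h0
        rw [h0, div_zero] at hx
        exact hx rfl
      have e2 : ∀ᶠ mu in 𝓝[≠] c, sinh (mu - c - η) ≠ 0 := hsinhsub.eventually_ne hηneg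
      have e3 : ∀ᶠ mu in 𝓝[≠] c, sinh (mu - c + η) ≠ 0 := hsinhadd.eventually_ne hη
      filter_upwards [e1, e2, e3, self_mem_nhdsWithin] with mu h1 h2 h3 hne
      have hεne : mu - c ≠ 0 := sub_ne_zero.mpr hne
      simp only [hg, tker, slope_def_field, ← hc, hBethe]
      rw [show lam j - mu + η = -(mu - c - η) by rw [hc]; ring,
          show lam j - mu = -(mu - c) by rw [hc]; ring]
      rw [sinh_neg, sinh_neg]
      field_simp
      simp only [Complex.sinh_add, Complex.sinh_sub, Complex.sinh_two_mul, mul_comm η 2]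
      ring
    exact hgl.congr' hev.symm
  · -- off-diagonal case: continuity
    obtain ⟨h1, h2, h3⟩ := hjk hcase
    have h1' : sinh (lam k - lam j) ≠ 0 := by
      rw [show lam k - lam j = -(lam j - lam k) by ring, sinh_neg]
      simpa using h1
    have h2' : sinh (lam k - lam j + η) ≠ 0 := by
      rw [show lam k - lam j + η = -(lam j - lam k - η) by ring, sinh_neg]
      simpa using h3
    have hcont : ContinuousAt (fun mu : ℂ => tker η (lam j) mu - tker η mu (lam j) * 𝔞 mu)
        (lam k) := by
      apply ContinuousAt.sub
      · apply ContinuousAt.div continuousAt_const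
        · exact ((Complex.continuous_sinh.comp (continuous_const.sub continuous_id)).mul
            (Complex.continuous_sinh.comp ((continuous_const.sub continuous_id).add
              continuous_const))).continuousAt
        · exact mul_ne_zero h1 h2
      · apply ContinuousAt.mul _ ha.continuousAt
        apply ContinuousAt.div continuousAt_const
        · exact ((Complex.continuous_sinh.comp (continuous_id.sub continuous_const)).mul
            (Complex.continuous_sinh.comp ((continuous_id.sub continuous_const).add
              continuous_const))).continuousAt
        · exact mul_ne_zero h1' h2'
    have := hcont.tendsto.mono_left (nhdsWithin_le_nhds (s := {lam k}ᶜ))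
    convert this using 2
    simp only [tker, if_neg hcase, zero_mul, zero_add, hBethe]
    rw [show lam k - lam j + η = -(lam j - lam k - η) by ring,
        show lam k - lam j = -(lam j - lam k) by ring, sinh_neg, sinh_neg]
    field_simp
    simp only [Complex.sinh_add, Complex.sinh_sub, Complex.sinh_two_mul]
    ring
end
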